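/- Every point of the surface S(r,t) = ((R/a)·cos r·cos t, (R/a)·sin r·cos t, R·sin t), with a = cos(r − (i−1)·2π/n) and parameters in the stated ranges, satisfies x·cos θᵢ + y·sin θᵢ ≤ R where θᵢ = (i−1)·2π/n, with equality exactly on the i-th sector where t is such that cos t = a⁻¹·a, i.e., the surface lies inside the infinite prism over the regular n-gon of apothem R. -/
import Mathlib
set_option maxHeartbeats 800000

open Real

/-- If both half-angle points lie in [0, π], shifting by c does not increase cosine. -/
lemma cos_add_le_cos_aux (x c : ℝ) (h1 : 0 ≤ x + c / 2) (h2 : x + c / 2 ≤ π)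
    (h3 : 0 ≤ c / 2) (h4 : c / 2 ≤ π) : Real.cos (x + c) ≤ Real.cos x := by
  have hc := Real.cos_sub_cos (x + c) x
  have e1 : (x + c + x) / 2 = x + c / 2 := by ring
  have e2 : (x + c - x) / 2 = c / 2 := by ring
  rw [e1, e2] at hc
  have s1 := Real.sin_nonneg_of_nonneg_of_le_pi h1 h2
  have s2 := Real.sin_nonneg_of_nonneg_of_le_pi h3 h4
  nlinarith [mul_nonneg s1 s2]

lemma cos_shift_le (n : ℕ) (hn : 3 ≤ n) (x : ℝ)
    (hx1 : -(π / n) ≤ x) (hx2 : x ≤ π / n)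
    (m : ℤ) (hm0 : 0 ≤ m) (hm : m < (n : ℤ)) :
    Real.cos (x + (m : ℝ) * (2 * π / n)) ≤ Real.cos x := by
  have hπ := Real.pi_pos
  have hn' : (0 : ℝ) < n := by positivity
  have hu : (0 : ℝ) < π / n := by positivity
  rcases eq_or_lt_of_le hm0 with h0 | h1
  · simp [← h0]
  · have hm1 : (1 : ℝ) ≤ (m : ℝ) := by exact_mod_cast h1
    have hm2 : (m : ℝ) ≤ (n : ℝ) - 1 := by
      have : m ≤ (n : ℤ) - 1 := by omega
      have h' : ((m : ℝ)) ≤ ((n : ℤ) - 1 : ℤ) := by exact_mod_cast this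
      push_cast at h'; linarith
    have hcancel : (n : ℝ) * (π / n) = π := by field_simp
    have hml : π / n ≤ (m : ℝ) * (π / n) :=
      le_mul_of_one_le_left hu.le hm1
    have hmu : (m : ℝ) * (π / n) ≤ ((n : ℝ) - 1) * (π / n) :=
      mul_le_mul_of_nonneg_right hm2 hu.le
    have hhalf : (m : ℝ) * (2 * π / n) / 2 = (m : ℝ) * (π / n) := by ring
    apply cos_add_le_cos_aux <;> rw [hhalf] <;> linarith

lemma cos_shift_le' (n : ℕ) (hn : 3 ≤ n) (x : ℝ)
    (hx1 : -(π / n) ≤ x) (hx2 : x ≤ π / n)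
    (m : ℤ) (hm1 : -(n : ℤ) < m) (hm2 : m < (n : ℤ)) :
    Real.cos (x + (m : ℝ) * (2 * π / n)) ≤ Real.cos x := by
  rcases le_or_gt 0 m with h | h
  · exact cos_shift_le n hn x hx1 hx2 m h hm2
  · have e1 : Real.cos (x + (m : ℝ) * (2 * π / n))
        = Real.cos ((-x) + ((-m : ℤ) : ℝ) * (2 * π / n)) := by
      rw [← Real.cos_neg (x + (m : ℝ) * (2 * π / n))]
      congr 1
      push_cast
      ring
    have e2 : Real.cos x = Real.cos (-x) := (Real.cos_neg x).symm
    rw [e1, e2]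
    exact cos_shift_le n hn (-x) (by linarith) (by linarith) (-m) (by omega) (by omega)

theorem surface_inside_prism (R : ℝ) (hR : 0 < R) (n : ℕ) (hn : 3 ≤ n)
    (j : ℕ) (hj : j ∈ Finset.Icc 1 n) (r : ℝ)
    (hr : r ∈ Set.Icc (((-1 : ℝ) / 2 + ((j : ℝ) - 1)) * (2 * π / n))
      (((-1 : ℝ) / 2 + (j : ℝ)) * (2 * π / n)))
    (a : ℝ) (ha : a = Real.cos (r - ((j : ℝ) - 1) * (2 * π / n)))
    (t : ℝ) (ht : t ∈ Set.Icc 0 (π / 2))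
    (i : ℕ) (hi : i ∈ Finset.Icc 1 n) :
    ((R / a) * Real.cos r * Real.cos t) * Real.cos (((i : ℝ) - 1) * (2 * π / n))
      + ((R / a) * Real.sin r * Real.cos t) * Real.sin (((i : ℝ) - 1) * (2 * π / n)) ≤ R := by
  obtain ⟨hj1, hjn⟩ := Finset.mem_Icc.mp hj
  obtain ⟨hi1, hin⟩ := Finset.mem_Icc.mp hi
  obtain ⟨hr1, hr2⟩ := hr
  obtain ⟨ht1, ht2⟩ := ht
  have hπ := Real.pi_pos
  have hn' : (0 : ℝ) < n := by positivity
  have hn3 : (3 : ℝ) ≤ (n : ℝ) := by exact_mod_cast hn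
  set θi : ℝ := ((i : ℝ) - 1) * (2 * π / n) with hθi
  set θj : ℝ := ((j : ℝ) - 1) * (2 * π / n) with hθj
  set x : ℝ := r - θj with hx
  -- bounds on x
  have hx1 : -(π / n) ≤ x := by
    have : ((-1 : ℝ) / 2 + ((j : ℝ) - 1)) * (2 * π / n) = θj - π / n := by
      rw [hθj]; ring
    rw [this] at hr1
    simp only [hx]; linarith
  have hx2 : x ≤ π / n := by
    have : ((-1 : ℝ) / 2 + (j : ℝ)) * (2 * π / n) = θj + π / n := by
      rw [hθj]; ring
    rw [this] at hr2
    simp only [hx]; linarith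
  -- a = cos x and a > 0
  have hax : a = Real.cos x := ha
  have hun : π / n ≤ π / 3 := by
    apply div_le_div_of_nonneg_left hπ.le (by norm_num) hn3
  have ha0 : 0 < a := by
    rw [hax]
    apply Real.cos_pos_of_mem_Ioo
    constructor <;> [nlinarith; nlinarith]
  have ha1 : a ≤ 1 := hax ▸ Real.cos_le_one x
  -- cos t bounds
  have hct0 : 0 ≤ Real.cos t := Real.cos_nonneg_of_mem_Icc ⟨by linarith, ht2⟩
  have hct1 : Real.cos t ≤ 1 := Real.cos_le_one t
  -- the key cosine inequality
  have hm1 : -(n : ℤ) < (j : ℤ) - (i : ℤ) := by omega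
  have hm2 : (j : ℤ) - (i : ℤ) < (n : ℤ) := by omega
  have harg : r - θi = x + (((j : ℤ) - (i : ℤ) : ℤ) : ℝ) * (2 * π / n) := by
    rw [hx, hθi, hθj]; push_cast; ring
  have hkey : Real.cos (r - θi) ≤ a := by
    rw [harg, hax]
    exact cos_shift_le' n hn x hx1 hx2 ((j : ℤ) - (i : ℤ)) hm1 hm2
  -- rewrite LHS
  have hlhs : ((R / a) * Real.cos r * Real.cos t) * Real.cos θi
      + ((R / a) * Real.sin r * Real.cos t) * Real.sin θi
      = (R / a) * (Real.cos t * Real.cos (r - θi)) := by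
    rw [Real.cos_sub]; ring
  rw [hlhs]
  rw [div_mul_eq_mul_div, div_le_iff₀ ha0]
  have hCa : Real.cos t * Real.cos (r - θi) ≤ a := by
    rcases le_or_gt (Real.cos (r - θi)) 0 with h | h
    · nlinarith
    · nlinarith
  nlinarith
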